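/- Let E/F be an unramified quadratic field extension. The group 𝒪_r^× acts on 𝒪_r^{(n)} by multiplication, and the number of orbits |𝒪_r^× \ 𝒪_r^{(n)}| equals: 0 if n is odd or n > 2r; 1 if n = 0; q^r if n = 2r; and q^{n/2}(1 − q^{−1}) if n is even and 0 < n < 2r. -/

import Mathlib

/-! Setup: `F` nonarchimedean local field with ring of integers `𝔬` (a DVR `o`),
uniformizer `ϖ`, and finite residue field `𝔬/𝔭` of cardinality `q`; `E/F` a quadratic
field extension with ring of integers `𝒪` (a DVR `O`), inclusion `f : 𝔬 → 𝒪`;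
`β ∈ 𝒪 ∖ 𝔬` with `𝒪 = 𝔬 + β𝔬` and `Nr(β) ∈ 𝔬^×`, the norm `Nr` pinned down by the
involutive conjugation `σ` via `f (Nr z) = z · σ z`.  `𝒪_r = 𝔬 + ϖ^rβ𝔬`,
`𝒪_r^{(n)} = {t ∈ 𝒪_r ∖ ϖ𝒪_r : Nr(t) ∈ ϖⁿ𝔬^×}`; the group `𝒪_r^×` acts on
`𝒪_r^{(n)}` by multiplication, and `|𝒪_r^× \ 𝒪_r^{(n)}|` denotes the number of
orbits.  `E/F` unramified means `f ϖ` is irreducible in `𝒪`. -/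

/-- The order `𝒪_r = 𝔬 + ϖ^rβ𝔬` of conductor `r`. -/
def ordSet {o O : Type*} [CommRing o] [CommRing O] (f : o →+* O) (ϖ : o) (β : O)
    (r : ℕ) : Set O :=
  {z | ∃ x y : o, z = f x + f (ϖ ^ r * y) * β}

/-- The unit group `𝒪_r^×` of the order `𝒪_r` (as a subset of `𝒪`). -/
def ordUnits {o O : Type*} [CommRing o] [CommRing O] (f : o →+* O) (ϖ : o) (β : O)
    (r : ℕ) : Set O :=
  {z | z ∈ ordSet f ϖ β r ∧ ∃ w ∈ ordSet f ϖ β r, z * w = 1}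

/-- The set `𝒪_r^{(n)} = {t ∈ 𝒪_r ∖ ϖ𝒪_r : Nr(t) ∈ ϖⁿ𝔬^×}`. -/
def ordLayer {o O : Type*} [CommRing o] [CommRing O] (f : o →+* O) (ϖ : o) (β : O)
    (Nr : O →* o) (r n : ℕ) : Set O :=
  {z | z ∈ ordSet f ϖ β r ∧ (¬ ∃ s ∈ ordSet f ϖ β r, z = f ϖ * s) ∧
    ∃ u : oˣ, Nr z = ϖ ^ n * u}

/-- The number of orbits `|𝒪_r^× \ 𝒪_r^{(n)}|` for the multiplication action of
`𝒪_r^×` on `𝒪_r^{(n)}`. -/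
noncomputable def ordLayerOrbits {o O : Type*} [CommRing o] [CommRing O]
    (f : o →+* O) (ϖ : o) (β : O) (Nr : O →* o) (r n : ℕ) : ℕ :=
  Nat.card (Quot (fun t t' : ordLayer f ϖ β Nr r n =>
    ∃ u ∈ ordUnits f ϖ β r, u * (t : O) = t'))


set_option linter.unusedSectionVars false
open Function


section Aux

variable {o O : Type*} [CommRing o] [IsDomain o] [IsDiscreteValuationRing o]
    [CommRing O] [IsDomain O] [IsDiscreteValuationRing O]

/-- All hypotheses of the setup bundled, together with derived trace/norm data `T`, `N`. -/
structure QuadCtx (o O : Type*) [CommRing o] [IsDomain o] [IsDiscreteValuationRing o]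
    [CommRing O] [IsDomain O] [IsDiscreteValuationRing O] where
  f : o →+* O
  hf : Function.Injective f
  ϖ : o
  hϖ : Irreducible ϖ
  β : O
  hβ : β ∉ Set.range f
  hgen : ∀ z : O, ∃ x y : o, z = f x + f y * β
  σ : O →+* O
  hσf : ∀ x : o, σ (f x) = f x
  hσσ : ∀ z : O, σ (σ z) = z
  Nr : O →* o
  hNr : ∀ z : O, f (Nr z) = z * σ z
  hβunit : IsUnit (Nr β)
  hunram : Irreducible (f ϖ)
  T : o
  N : o
  hN : IsUnit N
  hσβ : σ β = f T - β
  hβ2 : β * β = f T * β - f N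

/-- In a DVR, a nonunit is divisible by any irreducible. -/
lemma dvr_dvd_of_not_isUnit {x t : o} (ht : Irreducible t) (hx : ¬ IsUnit x) : t ∣ x := by
  rw [← Ideal.mem_span_singleton, ← (IsDiscreteValuationRing.irreducible_iff_uniformizer t).mp ht]
  exact (IsLocalRing.mem_maximalIdeal x).mpr hx

lemma dvr_isUnit_of_not_dvd {x t : o} (ht : Irreducible t) (hx : ¬ t ∣ x) : IsUnit x := by
  by_contra h; exact hx (dvr_dvd_of_not_isUnit ht h)

namespace QuadCtx

variable (C : QuadCtx o O)

lemma βunit : IsUnit C.β := by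
  have h := C.hNr C.β
  have h2 : IsUnit (C.f (C.Nr C.β)) := C.hβunit.map C.f
  rw [h] at h2
  exact isUnit_of_mul_isUnit_left h2

lemma funits {x : o} : IsUnit (C.f x) ↔ IsUnit x := by
  constructor
  · intro h
    by_contra hx
    obtain ⟨c, rfl⟩ := dvr_dvd_of_not_isUnit C.hϖ hx
    rw [map_mul] at h
    exact C.hunram.not_isUnit (isUnit_of_mul_isUnit_left h)
  · exact fun h => h.map C.f

lemma fne_zero {x : o} (hx : x ≠ 0) : C.f x ≠ 0 := fun h => hx (C.hf (by rw [h, map_zero]))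

lemma ϖ_ne_zero : C.ϖ ≠ 0 := C.hϖ.ne_zero

lemma helper0 (u v : oˣ) (h : C.f (u : o) + C.f (v : o) * C.β = 0) : False := by
  apply C.hβ
  refine ⟨-((u : o) * ((v⁻¹ : oˣ) : o)), ?_⟩
  have hv2 : C.f (v : o) * C.f ((v⁻¹ : oˣ) : o) = 1 := by
    rw [← map_mul, Units.mul_inv, map_one]
  simp only [map_neg, map_mul]
  linear_combination (-(C.f ((v⁻¹ : oˣ) : o))) * h + C.β * hv2

lemma helper2 (u v : oˣ) (d : ℕ) (h : C.f ((u : o) * C.ϖ ^ (d + 1)) + C.f (v : o) * C.β = 0) :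
    False := by
  have hunit : IsUnit (C.f (v : o) * C.β) := (C.funits.mpr v.isUnit).mul C.βunit
  have h2 : IsUnit (C.f ((u : o) * C.ϖ ^ (d + 1))) := by
    rw [eq_neg_of_add_eq_zero_left h]
    exact hunit.neg
  have h3 : IsUnit ((u : o) * C.ϖ ^ (d + 1)) := C.funits.mp h2
  have h4 : IsUnit (C.ϖ ^ (d + 1)) := isUnit_of_mul_isUnit_right h3
  rw [pow_succ] at h4
  exact C.hϖ.not_isUnit (isUnit_of_mul_isUnit_right h4)

lemma helper1 (u v : oˣ) (d : ℕ) (h : C.f (u : o) + C.f ((v : o) * C.ϖ ^ (d + 1)) * C.β = 0) :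
    False := by
  have hdvd : C.f C.ϖ ∣ C.f (u : o) := by
    refine ⟨-(C.f ((v : o) * C.ϖ ^ d) * C.β), ?_⟩
    simp only [map_mul, map_pow, pow_succ] at h ⊢
    linear_combination h
  exact C.hunram.not_isUnit (isUnit_of_dvd_unit hdvd (C.funits.mpr u.isUnit))

/-- Uniqueness of the coordinates: `1, β` are linearly independent over `o`. -/
lemma uniq {x y : o} (h : C.f x + C.f y * C.β = 0) : x = 0 ∧ y = 0 := by
  by_cases hy : y = 0
  · subst hy
    simp only [map_zero, zero_mul, add_zero] at h
    exact ⟨C.hf (by rw [h, map_zero]), rfl⟩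
  · exfalso
    by_cases hx : x = 0
    · subst hx
      simp only [map_zero, zero_add] at h
      rcases mul_eq_zero.mp h with h | h
      · exact hy (C.hf (by rw [h, map_zero]))
      · exact C.hβ ⟨0, by rw [map_zero, h]⟩
    · obtain ⟨i, u, hxu⟩ := IsDiscreteValuationRing.eq_unit_mul_pow_irreducible hx C.hϖ
      obtain ⟨j, v, hyv⟩ := IsDiscreteValuationRing.eq_unit_mul_pow_irreducible hy C.hϖ
      subst hxu hyv
      rcases le_total i j with hij | hij
      · obtain ⟨d, rfl⟩ : ∃ d, j = i + d := ⟨j - i, by omega⟩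
        have h2 : C.f (C.ϖ ^ i) * (C.f (u : o) + C.f ((v : o) * C.ϖ ^ d) * C.β) = 0 := by
          rw [← h]; simp only [map_mul, map_pow, pow_add]; ring
        have h3 : C.f (u : o) + C.f ((v : o) * C.ϖ ^ d) * C.β = 0 :=
          (mul_eq_zero.mp h2).resolve_left (C.fne_zero (pow_ne_zero _ C.ϖ_ne_zero))
        rcases d with _ | d
        · rw [pow_zero, mul_one] at h3; exact C.helper0 u v h3
        · exact C.helper1 u v d h3
      · obtain ⟨d, rfl⟩ : ∃ d, i = j + d := ⟨i - j, by omega⟩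
        have h2 : C.f (C.ϖ ^ j) * (C.f ((u : o) * C.ϖ ^ d) + C.f (v : o) * C.β) = 0 := by
          rw [← h]; simp only [map_mul, map_pow, pow_add]; ring
        have h3 : C.f ((u : o) * C.ϖ ^ d) + C.f (v : o) * C.β = 0 :=
          (mul_eq_zero.mp h2).resolve_left (C.fne_zero (pow_ne_zero _ C.ϖ_ne_zero))
        rcases d with _ | d
        · rw [pow_zero, mul_one] at h3; exact C.helper0 u v h3
        · exact C.helper2 u v d h3

/-- Coordinates are unique. -/
lemma coords {a b a' b' : o} (h : C.f a + C.f b * C.β = C.f a' + C.f b' * C.β) :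
    a = a' ∧ b = b' := by
  have h2 : C.f (a - a') + C.f (b - b') * C.β = 0 := by
    simp only [map_sub]; linear_combination h
  obtain ⟨h3, h4⟩ := C.uniq h2
  constructor <;> [skip; skip] <;> [exact sub_eq_zero.mp h3; exact sub_eq_zero.mp h4]

end QuadCtx
end Aux


section Standalone
variable {o O : Type*} [CommRing o] [IsDomain o] [IsDiscreteValuationRing o]
    [CommRing O] [IsDomain O] [IsDiscreteValuationRing O]
variable {f : o →+* O} {ϖ : o} {β : O} {σ : O →+* O} {Nr : O →* o}

lemma sa_fne_zero (hf : Function.Injective f) {x : o} (hx : x ≠ 0) :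
    f x ≠ 0 := fun h => hx (hf (by rw [h, map_zero]))

lemma sa_βunit (hNr : ∀ z : O, f (Nr z) = z * σ z) (hβunit : IsUnit (Nr β)) :
    IsUnit β := by
  have h := hNr β
  have h2 : IsUnit (f (Nr β)) := hβunit.map f
  rw [h] at h2
  exact isUnit_of_mul_isUnit_left h2

lemma sa_funits (hϖ : Irreducible ϖ) (hunram : Irreducible (f ϖ)) {x : o} :
    IsUnit (f x) ↔ IsUnit x := by
  constructor
  · intro h
    by_contra hx
    obtain ⟨c, rfl⟩ := dvr_dvd_of_not_isUnit hϖ hx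
    rw [map_mul] at h
    exact hunram.not_isUnit (isUnit_of_mul_isUnit_left h)
  · exact fun h => h.map f

lemma sa_helper0 (hβ : β ∉ Set.range f) (u v : oˣ)
    (h : f (u : o) + f (v : o) * β = 0) : False := by
  apply hβ
  refine ⟨-((u : o) * ((v⁻¹ : oˣ) : o)), ?_⟩
  have hv2 : f (v : o) * f ((v⁻¹ : oˣ) : o) = 1 := by
    rw [← map_mul, Units.mul_inv, map_one]
  simp only [map_neg, map_mul]
  linear_combination (-(f ((v⁻¹ : oˣ) : o))) * h + β * hv2

lemma sa_helper2 (hϖ : Irreducible ϖ) (hunram : Irreducible (f ϖ)) (hβu : IsUnit β)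
    (u v : oˣ) (d : ℕ) (h : f ((u : o) * ϖ ^ (d + 1)) + f (v : o) * β = 0) : False := by
  have hunit : IsUnit (f (v : o) * β) := ((sa_funits hϖ hunram).mpr v.isUnit).mul hβu
  have h2 : IsUnit (f ((u : o) * ϖ ^ (d + 1))) := by
    rw [eq_neg_of_add_eq_zero_left h]
    exact hunit.neg
  have h3 : IsUnit ((u : o) * ϖ ^ (d + 1)) := (sa_funits hϖ hunram).mp h2
  have h4 : IsUnit (ϖ ^ (d + 1)) := isUnit_of_mul_isUnit_right h3
  rw [pow_succ] at h4
  exact hϖ.not_isUnit (isUnit_of_mul_isUnit_right h4)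

lemma sa_helper1 (hϖ : Irreducible ϖ) (hunram : Irreducible (f ϖ))
    (u v : oˣ) (d : ℕ) (h : f (u : o) + f ((v : o) * ϖ ^ (d + 1)) * β = 0) : False := by
  have hdvd : f ϖ ∣ f (u : o) := by
    refine ⟨-(f ((v : o) * ϖ ^ d) * β), ?_⟩
    simp only [map_mul, map_pow, pow_succ] at h ⊢
    linear_combination h
  exact hunram.not_isUnit (isUnit_of_dvd_unit hdvd ((sa_funits hϖ hunram).mpr u.isUnit))

/-- Uniqueness of the coordinates: `1, β` are linearly independent over `o`. -/
lemma sa_uniq (hf : Function.Injective f) (hϖ : Irreducible ϖ) (hβ : β ∉ Set.range f)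
    (hunram : Irreducible (f ϖ)) (hβu : IsUnit β) {x y : o}
    (h : f x + f y * β = 0) : x = 0 ∧ y = 0 := by
  by_cases hy : y = 0
  · subst hy
    simp only [map_zero, zero_mul, add_zero] at h
    exact ⟨hf (by rw [h, map_zero]), rfl⟩
  · exfalso
    by_cases hx : x = 0
    · subst hx
      simp only [map_zero, zero_add] at h
      rcases mul_eq_zero.mp h with h | h
      · exact hy (hf (by rw [h, map_zero]))
      · exact hβ ⟨0, by rw [map_zero, h]⟩
    · obtain ⟨i, u, hxu⟩ := IsDiscreteValuationRing.eq_unit_mul_pow_irreducible hx hϖ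
      obtain ⟨j, v, hyv⟩ := IsDiscreteValuationRing.eq_unit_mul_pow_irreducible hy hϖ
      subst hxu hyv
      rcases le_total i j with hij | hij
      · obtain ⟨d, rfl⟩ : ∃ d, j = i + d := ⟨j - i, by omega⟩
        have h2 : f (ϖ ^ i) * (f (u : o) + f ((v : o) * ϖ ^ d) * β) = 0 := by
          rw [← h]; simp only [map_mul, map_pow, pow_add]; ring
        have h3 : f (u : o) + f ((v : o) * ϖ ^ d) * β = 0 :=
          (mul_eq_zero.mp h2).resolve_left (sa_fne_zero hf (pow_ne_zero _ hϖ.ne_zero))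
        rcases d with _ | d
        · rw [pow_zero, mul_one] at h3; exact sa_helper0 hβ u v h3
        · exact sa_helper1 hϖ hunram u v d h3
      · obtain ⟨d, rfl⟩ : ∃ d, i = j + d := ⟨i - j, by omega⟩
        have h2 : f (ϖ ^ j) * (f ((u : o) * ϖ ^ d) + f (v : o) * β) = 0 := by
          rw [← h]; simp only [map_mul, map_pow, pow_add]; ring
        have h3 : f ((u : o) * ϖ ^ d) + f (v : o) * β = 0 :=
          (mul_eq_zero.mp h2).resolve_left (sa_fne_zero hf (pow_ne_zero _ hϖ.ne_zero))
        rcases d with _ | d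
        · rw [pow_zero, mul_one] at h3; exact sa_helper0 hβ u v h3
        · exact sa_helper2 hϖ hunram hβu u v d h3


end Standalone

namespace QuadCtx
section P2
variable {o O : Type*} [CommRing o] [IsDomain o] [IsDiscreteValuationRing o]
    [CommRing O] [IsDomain O] [IsDiscreteValuationRing O]
variable (C : QuadCtx o O)

/-- Divisibility by `f c` in coordinates. -/
lemma fdvd {c a b : o} : C.f c ∣ C.f a + C.f b * C.β ↔ (c ∣ a ∧ c ∣ b) := by
  constructor
  · rintro ⟨z, hz⟩
    obtain ⟨x, y, rfl⟩ := C.hgen z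
    have h2 : C.f a + C.f b * C.β = C.f (c * x) + C.f (c * y) * C.β := by
      rw [hz]; simp only [map_mul]; ring
    obtain ⟨h3, h4⟩ := C.coords h2
    exact ⟨⟨x, h3⟩, ⟨y, h4⟩⟩
  · rintro ⟨⟨x, rfl⟩, ⟨y, rfl⟩⟩
    exact ⟨C.f x + C.f y * C.β, by simp only [map_mul]; ring⟩

lemma isUnit_coords {a b : o} : IsUnit (C.f a + C.f b * C.β) ↔ ¬ (C.ϖ ∣ a ∧ C.ϖ ∣ b) := by
  constructor
  · intro h hab
    have h2 : C.f C.ϖ ∣ C.f a + C.f b * C.β := C.fdvd.mpr hab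
    exact C.hunram.not_isUnit (isUnit_of_dvd_unit h2 h)
  · intro h
    by_contra hz
    have h2 : C.f C.ϖ ∣ C.f a + C.f b * C.β := by
      rw [← Ideal.mem_span_singleton,
        ← (IsDiscreteValuationRing.irreducible_iff_uniformizer (C.f C.ϖ)).mp C.hunram]
      exact (IsLocalRing.mem_maximalIdeal _).mpr hz
    exact h (C.fdvd.mp h2)

lemma Nr_unit {z : O} : IsUnit (C.Nr z) ↔ IsUnit z := by
  constructor
  · intro h
    have h2 : IsUnit (C.f (C.Nr z)) := h.map C.f
    rw [C.hNr] at h2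
    exact isUnit_of_mul_isUnit_left h2
  · intro h
    apply C.funits.mp
    rw [C.hNr]
    exact h.mul (h.map C.σ)

lemma Nr_zero : C.Nr 0 = 0 := by
  apply C.hf
  rw [C.hNr, zero_mul, map_zero]

/-- Multiplication law in coordinates. -/
lemma mulc (a b c d : o) :
    (C.f a + C.f b * C.β) * (C.f c + C.f d * C.β)
      = C.f (a * c - b * d * C.N) + C.f (a * d + b * c + b * d * C.T) * C.β := by
  simp only [map_mul, map_sub, map_add]
  linear_combination (C.f b * C.f d) * C.hβ2

/-- Conjugation in coordinates. -/
lemma σc (a b : o) :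
    C.σ (C.f a + C.f b * C.β) = C.f (a + b * C.T) + C.f (-b) * C.β := by
  rw [map_add, map_mul, C.hσf, C.hσf, C.hσβ]
  simp only [map_add, map_mul, map_neg]
  ring

/-- Norm in coordinates. -/
lemma Nrc (a b : o) :
    C.Nr (C.f a + C.f b * C.β) = a * a + a * b * C.T + b * b * C.N := by
  apply C.hf
  rw [C.hNr, C.σc, C.mulc]
  have h1 : a * (-b) + b * (a + b * C.T) + b * (-b) * C.T = 0 := by ring
  have h2 : a * (a + b * C.T) - b * (-b) * C.N = a * a + a * b * C.T + b * b * C.N := by ring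
  rw [h1, h2, map_zero, zero_mul, add_zero]

lemma coord_ext {a b a' b' : o} (h1 : a = a') (h2 : b = b') :
    C.f a + C.f b * C.β = C.f a' + C.f b' * C.β := by rw [h1, h2]

/- ordSet membership lemmas -/
lemma mem_ordSet {r : ℕ} {a b : o} : C.f a + C.f (C.ϖ ^ r * b) * C.β ∈ ordSet C.f C.ϖ C.β r :=
  ⟨a, b, rfl⟩

lemma one_mem_ordSet {r : ℕ} : (1 : O) ∈ ordSet C.f C.ϖ C.β r :=
  ⟨1, 0, by simp⟩

lemma mul_mem_ordSet {r : ℕ} {z w : O} (hz : z ∈ ordSet C.f C.ϖ C.β r)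
    (hw : w ∈ ordSet C.f C.ϖ C.β r) : z * w ∈ ordSet C.f C.ϖ C.β r := by
  obtain ⟨a, b, rfl⟩ := hz
  obtain ⟨c, d, rfl⟩ := hw
  refine ⟨a * c - (C.ϖ ^ r * b) * (C.ϖ ^ r * d) * C.N,
    a * d + b * c + (C.ϖ ^ r * b) * d * C.T, ?_⟩
  rw [C.mulc]
  exact C.coord_ext (by ring) (by ring)

lemma smul_mem_ordSet {r : ℕ} {z : O} (s : o) (hz : z ∈ ordSet C.f C.ϖ C.β r) :
    C.f s * z ∈ ordSet C.f C.ϖ C.β r := by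
  obtain ⟨a, b, rfl⟩ := hz
  refine ⟨s * a, s * b, ?_⟩
  simp only [map_mul]
  ring

lemma σ_mem_ordSet {r : ℕ} {z : O} (hz : z ∈ ordSet C.f C.ϖ C.β r) :
    C.σ z ∈ ordSet C.f C.ϖ C.β r := by
  obtain ⟨a, b, rfl⟩ := hz
  rw [C.σc]
  exact ⟨a + C.ϖ ^ r * b * C.T, -b, C.coord_ext rfl (by ring)⟩

lemma mem_ordUnits_of {r : ℕ} {z : O} (hz : z ∈ ordSet C.f C.ϖ C.β r)
    (hu : IsUnit (C.Nr z)) : z ∈ ordUnits C.f C.ϖ C.β r := by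
  refine ⟨hz, C.f ((hu.unit⁻¹ : oˣ) : o) * C.σ z, C.smul_mem_ordSet _ (C.σ_mem_ordSet hz), ?_⟩
  have h : z * C.σ z = C.f (C.Nr z) := (C.hNr z).symm
  calc z * (C.f ((hu.unit⁻¹ : oˣ) : o) * C.σ z)
      = C.f ((hu.unit⁻¹ : oˣ) : o) * (z * C.σ z) := by ring
    _ = C.f ((hu.unit⁻¹ : oˣ) : o) * C.f (C.Nr z) := by rw [h]
    _ = C.f (((hu.unit⁻¹ : oˣ) : o) * C.Nr z) := by rw [map_mul]
    _ = 1 := by rw [IsUnit.val_inv_mul, map_one]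

/-- Primitivity in coordinates. -/
lemma prim_iff {r : ℕ} {a b : o} :
    (¬ ∃ s ∈ ordSet C.f C.ϖ C.β r, C.f a + C.f (C.ϖ ^ r * b) * C.β = C.f C.ϖ * s)
      ↔ ¬ (C.ϖ ∣ a ∧ C.ϖ ∣ b) := by
  apply not_iff_not.mpr
  constructor
  · rintro ⟨s, ⟨x, y, rfl⟩, heq⟩
    have h2 : C.f a + C.f (C.ϖ ^ r * b) * C.β
        = C.f (C.ϖ * x) + C.f (C.ϖ ^ r * (C.ϖ * y)) * C.β := by
      rw [heq]; simp only [map_mul]; ring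
    obtain ⟨h3, h4⟩ := C.coords h2
    refine ⟨⟨x, h3⟩, ⟨y, ?_⟩⟩
    have h5 : C.ϖ ^ r * b = C.ϖ ^ r * (C.ϖ * y) := h4
    exact mul_left_cancel₀ (pow_ne_zero _ C.ϖ_ne_zero) h5
  · rintro ⟨⟨x, rfl⟩, ⟨y, rfl⟩⟩
    refine ⟨C.f x + C.f (C.ϖ ^ r * y) * C.β, ⟨x, y, rfl⟩, ?_⟩
    simp only [map_mul]; ring

end P2
end QuadCtx

namespace QuadCtx
section P3
variable {o O : Type*} [CommRing o] [IsDomain o] [IsDiscreteValuationRing o]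
    [CommRing O] [IsDomain O] [IsDiscreteValuationRing O]
variable (C : QuadCtx o O)

/-- Extracting the common `ϖ`-power of a pair. -/
lemma extract2 {a c : o} (h : ¬ (a = 0 ∧ c = 0)) :
    ∃ (k : ℕ) (a₀ c₀ : o), a = C.ϖ ^ k * a₀ ∧ c = C.ϖ ^ k * c₀ ∧ (IsUnit a₀ ∨ IsUnit c₀) := by
  by_cases ha : a = 0
  · subst ha
    have hc : c ≠ 0 := fun h' => h ⟨rfl, h'⟩
    obtain ⟨j, v, rfl⟩ := IsDiscreteValuationRing.eq_unit_mul_pow_irreducible hc C.hϖ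
    exact ⟨j, 0, (v : o), by ring, by ring, Or.inr v.isUnit⟩
  · by_cases hc : c = 0
    · subst hc
      obtain ⟨i, u, rfl⟩ := IsDiscreteValuationRing.eq_unit_mul_pow_irreducible ha C.hϖ
      exact ⟨i, (u : o), 0, by ring, by ring, Or.inl u.isUnit⟩
    · obtain ⟨i, u, rfl⟩ := IsDiscreteValuationRing.eq_unit_mul_pow_irreducible ha C.hϖ
      obtain ⟨j, v, rfl⟩ := IsDiscreteValuationRing.eq_unit_mul_pow_irreducible hc C.hϖ
      rcases le_total i j with hij | hij
      · obtain ⟨d, rfl⟩ : ∃ d, j = i + d := ⟨j - i, by omega⟩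
        exact ⟨i, (u : o), (v : o) * C.ϖ ^ d, by ring, by rw [pow_add]; ring, Or.inl u.isUnit⟩
      · obtain ⟨d, rfl⟩ : ∃ d, i = j + d := ⟨i - j, by omega⟩
        exact ⟨j, (u : o) * C.ϖ ^ d, (v : o), by rw [pow_add]; ring, by ring, Or.inr v.isUnit⟩

lemma pow_unit_lt {i j : ℕ} (hij : i < j) (w₁ w₂ : oˣ)
    (h : C.ϖ ^ i * (w₁ : o) = C.ϖ ^ j * (w₂ : o)) : False := by
  obtain ⟨d, rfl⟩ : ∃ d, j = i + (d + 1) := ⟨j - i - 1, by omega⟩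
  have h2 : (w₁ : o) = C.ϖ * (C.ϖ ^ d * (w₂ : o)) := by
    apply mul_left_cancel₀ (pow_ne_zero i C.ϖ_ne_zero)
    rw [h, pow_add]; ring
  exact C.hϖ.not_isUnit (isUnit_of_mul_isUnit_left (h2 ▸ w₁.isUnit))

lemma pow_unit_inj {i j : ℕ} (w₁ w₂ : oˣ)
    (h : C.ϖ ^ i * (w₁ : o) = C.ϖ ^ j * (w₂ : o)) : i = j := by
  rcases lt_trichotomy i j with hij | hij | hij
  · exact absurd h (fun h => C.pow_unit_lt hij w₁ w₂ h)
  · exact hij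
  · exact absurd h.symm (fun h => C.pow_unit_lt hij w₂ w₁ h)

/-- Structure of elements of the layer `𝒪_r^{(n)}`. -/
lemma layer_struct {r n : ℕ} {z : O} (hz : z ∈ ordLayer C.f C.ϖ C.β C.Nr r n) :
    ∃ (m : ℕ) (a b : o) (w : oˣ), n = 2 * m ∧ m ≤ r ∧
      z = C.f (C.ϖ ^ m * a) + C.f (C.ϖ ^ r * b) * C.β ∧
      C.Nr z = C.ϖ ^ n * (w : o) ∧ (0 < m → IsUnit b) ∧ (m < r → IsUnit a) := by
  obtain ⟨⟨a₁, b, rfl⟩, hprim, u, hu⟩ := hz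
  rw [C.prim_iff] at hprim
  set z := C.f a₁ + C.f (C.ϖ ^ r * b) * C.β with hzdef
  have hnz : ¬ (a₁ = 0 ∧ C.ϖ ^ r * b = 0) := by
    rintro ⟨rfl, h0⟩
    have hz0 : z = 0 := by rw [hzdef, h0]; simp
    rw [hz0, C.Nr_zero] at hu
    exact (mul_ne_zero (pow_ne_zero _ C.ϖ_ne_zero) u.ne_zero) hu.symm
  obtain ⟨k, a₀, c₀, ha, hc, hor⟩ := C.extract2 hnz
  -- norm of z in terms of k
  have hNz : C.Nr z = C.ϖ ^ (2 * k) * (a₀ * a₀ + a₀ * c₀ * C.T + c₀ * c₀ * C.N) := by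
    rw [hzdef, ha, hc, C.Nrc]
    rw [two_mul, pow_add]; ring
  have hunit0 : IsUnit (a₀ * a₀ + a₀ * c₀ * C.T + c₀ * c₀ * C.N) := by
    rw [← C.Nrc]
    apply C.Nr_unit.mpr
    apply C.isUnit_coords.mpr
    rintro ⟨hda, hdc⟩
    rcases hor with h | h
    · exact C.hϖ.not_isUnit (isUnit_of_dvd_unit hda h)
    · exact C.hϖ.not_isUnit (isUnit_of_dvd_unit hdc h)
  have hn2k : n = 2 * k := by
    apply C.pow_unit_inj u hunit0.unit
    rw [← hu, hNz, IsUnit.unit_spec]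
  have hkr : k ≤ r := by
    by_contra hkr
    push_neg at hkr
    apply hprim
    obtain ⟨e, rfl⟩ : ∃ e, k = r + (e + 1) := ⟨k - r - 1, by omega⟩
    have hb : b = C.ϖ ^ (e + 1) * c₀ := by
      apply mul_left_cancel₀ (pow_ne_zero r C.ϖ_ne_zero)
      rw [hc, show r + (e + 1) = r + (e + 1) from rfl, pow_add]; ring
    constructor
    · rw [ha]
      exact ⟨C.ϖ ^ (r + e) * a₀, by rw [show r + (e + 1) = (r + e) + 1 by omega, pow_succ]; ring⟩
    · rw [hb]
      exact ⟨C.ϖ ^ e * c₀, by rw [pow_succ]; ring⟩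
  refine ⟨k, a₀, b, u, hn2k, hkr, by rw [hzdef, ha], hu, ?_, ?_⟩
  · intro hk
    apply dvr_isUnit_of_not_dvd C.hϖ
    intro hdb
    apply hprim
    refine ⟨?_, hdb⟩
    obtain ⟨d, rfl⟩ : ∃ d, k = d + 1 := ⟨k - 1, by omega⟩
    rw [ha]
    exact ⟨C.ϖ ^ d * a₀, by rw [pow_succ]; ring⟩
  · intro hkr'
    rcases hor with h | h
    · exact h
    · exfalso
      obtain ⟨e, rfl⟩ : ∃ e, r = k + (e + 1) := ⟨r - k - 1, by omega⟩
      have hc₀ : c₀ = C.ϖ ^ (e + 1) * b := by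
        apply mul_left_cancel₀ (pow_ne_zero k C.ϖ_ne_zero)
        rw [← hc, pow_add]; ring
      rw [hc₀] at h
      have h2 : IsUnit (C.ϖ ^ (e + 1)) := isUnit_of_mul_isUnit_left h
      rw [pow_succ] at h2
      exact C.hϖ.not_isUnit (isUnit_of_mul_isUnit_right h2)

end P3
end QuadCtx

namespace QuadCtx
section P4
variable {o O : Type*} [CommRing o] [IsDomain o] [IsDiscreteValuationRing o]
    [CommRing O] [IsDomain O] [IsDiscreteValuationRing O]
variable (C : QuadCtx o O)

lemma fsplit (x : o) : C.f x = C.f x + C.f 0 * C.β := by simp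

/-- If the cross-determinant is divisible by `ϖ^{2m}`, the two elements are related by a
unit of the order. -/
lemma rel_of_dvd {r m : ℕ} (hmr : m ≤ r) {a b a' b' : o} {w w' : oˣ}
    (ha : C.ϖ ^ m ∣ a) (ha' : C.ϖ ^ m ∣ a')
    (hw : C.Nr (C.f a + C.f (C.ϖ ^ r * b) * C.β) = C.ϖ ^ (2 * m) * (w : o))
    (hw' : C.Nr (C.f a' + C.f (C.ϖ ^ r * b') * C.β) = C.ϖ ^ (2 * m) * (w' : o))
    (hd : C.ϖ ^ (2 * m) ∣ a * b' - a' * b) :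
    ∃ u ∈ ordUnits C.f C.ϖ C.β r,
      u * (C.f a + C.f (C.ϖ ^ r * b) * C.β) = C.f a' + C.f (C.ϖ ^ r * b') * C.β := by
  obtain ⟨d, rfl⟩ : ∃ d, r = m + d := ⟨r - m, by omega⟩
  obtain ⟨a1, rfl⟩ := ha
  obtain ⟨a2, rfl⟩ := ha'
  obtain ⟨s₂, hs₂⟩ := hd
  have hwinv : (w : o) * ((w⁻¹ : oˣ) : o) = 1 := Units.mul_inv w
  have key : (C.f ((a1 * a2 + C.ϖ ^ d * (a2 * b) * C.T + C.ϖ ^ (2 * d) * (b * b' * C.N))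
        * ((w⁻¹ : oˣ) : o))
      + C.f (C.ϖ ^ (m + d) * (s₂ * ((w⁻¹ : oˣ) : o))) * C.β)
        * C.f (C.ϖ ^ (2 * m) * (w : o))
      = (C.f (C.ϖ ^ m * a2) + C.f (C.ϖ ^ (m + d) * b') * C.β)
        * C.σ (C.f (C.ϖ ^ m * a1) + C.f (C.ϖ ^ (m + d) * b) * C.β) := by
    rw [C.σc, C.mulc, fsplit C (C.ϖ ^ (2 * m) * (w : o)), C.mulc]
    apply C.coord_ext
    · linear_combination (C.ϖ ^ (2 * m)
        * (a1 * a2 + C.ϖ ^ d * (a2 * b) * C.T + C.ϖ ^ (2 * d) * (b * b' * C.N))) * hwinv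
    · linear_combination (C.ϖ ^ (m + d) * C.ϖ ^ (2 * m) * s₂) * hwinv
        - (C.ϖ ^ (m + d)) * hs₂
  have hts : (C.f (C.ϖ ^ m * a1) + C.f (C.ϖ ^ (m + d) * b) * C.β)
      * C.σ (C.f (C.ϖ ^ m * a1) + C.f (C.ϖ ^ (m + d) * b) * C.β)
      = C.f (C.ϖ ^ (2 * m) * (w : o)) := by
    rw [← hw]; exact (C.hNr _).symm
  have hne : C.f (C.ϖ ^ (2 * m) * (w : o)) ≠ 0 :=
    C.fne_zero (mul_ne_zero (pow_ne_zero _ C.ϖ_ne_zero) w.ne_zero)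
  have huteq : (C.f ((a1 * a2 + C.ϖ ^ d * (a2 * b) * C.T + C.ϖ ^ (2 * d) * (b * b' * C.N))
        * ((w⁻¹ : oˣ) : o))
      + C.f (C.ϖ ^ (m + d) * (s₂ * ((w⁻¹ : oˣ) : o))) * C.β)
        * (C.f (C.ϖ ^ m * a1) + C.f (C.ϖ ^ (m + d) * b) * C.β)
      = C.f (C.ϖ ^ m * a2) + C.f (C.ϖ ^ (m + d) * b') * C.β := by
    rw [← sub_eq_zero]
    have hzero : ((C.f ((a1 * a2 + C.ϖ ^ d * (a2 * b) * C.T + C.ϖ ^ (2 * d) * (b * b' * C.N))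
          * ((w⁻¹ : oˣ) : o))
        + C.f (C.ϖ ^ (m + d) * (s₂ * ((w⁻¹ : oˣ) : o))) * C.β)
          * (C.f (C.ϖ ^ m * a1) + C.f (C.ϖ ^ (m + d) * b) * C.β)
        - (C.f (C.ϖ ^ m * a2) + C.f (C.ϖ ^ (m + d) * b') * C.β))
          * C.f (C.ϖ ^ (2 * m) * (w : o)) = 0 := by
      linear_combination (C.f (C.ϖ ^ m * a1) + C.f (C.ϖ ^ (m + d) * b) * C.β) * key
        + (C.f (C.ϖ ^ m * a2) + C.f (C.ϖ ^ (m + d) * b') * C.β) * hts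
    exact (mul_eq_zero.mp hzero).resolve_right hne
  have hNru : IsUnit (C.Nr (C.f ((a1 * a2 + C.ϖ ^ d * (a2 * b) * C.T + C.ϖ ^ (2 * d) * (b * b' * C.N))
        * ((w⁻¹ : oˣ) : o))
      + C.f (C.ϖ ^ (m + d) * (s₂ * ((w⁻¹ : oˣ) : o))) * C.β)) := by
    have hNru := congrArg C.Nr huteq
    rw [map_mul, hw, hw'] at hNru
    have h3 : C.Nr (C.f ((a1 * a2 + C.ϖ ^ d * (a2 * b) * C.T + C.ϖ ^ (2 * d) * (b * b' * C.N))
          * ((w⁻¹ : oˣ) : o))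
        + C.f (C.ϖ ^ (m + d) * (s₂ * ((w⁻¹ : oˣ) : o))) * C.β) * (w : o) = (w' : o) := by
      apply mul_left_cancel₀ (pow_ne_zero (2 * m) C.ϖ_ne_zero)
      linear_combination hNru
    exact IsUnit.of_mul_eq_one ((w : o) * ((w'⁻¹ : oˣ) : o))
      (by rw [← mul_assoc, h3, Units.mul_inv])
  exact ⟨_, C.mem_ordUnits_of ⟨_, _, rfl⟩ hNru, huteq⟩

end P4
end QuadCtx

namespace QuadCtx
section P5
variable {o O : Type*} [CommRing o] [IsDomain o] [IsDiscreteValuationRing o]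
    [CommRing O] [IsDomain O] [IsDiscreteValuationRing O]
variable (C : QuadCtx o O)

/-- Conversely, related elements have cross-determinant divisible by `ϖ^{2m}`. -/
lemma dvd_of_rel {r m : ℕ} {a b a' b' : o} {w : oˣ}
    (hw : C.Nr (C.f a + C.f (C.ϖ ^ r * b) * C.β) = C.ϖ ^ (2 * m) * (w : o))
    (h : ∃ u ∈ ordUnits C.f C.ϖ C.β r,
      u * (C.f a + C.f (C.ϖ ^ r * b) * C.β) = C.f a' + C.f (C.ϖ ^ r * b') * C.β) :
    C.ϖ ^ (2 * m) ∣ a * b' - a' * b := by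
  obtain ⟨u, ⟨⟨x, y, rfl⟩, -⟩, hut⟩ := h
  rw [C.mulc] at hut
  obtain ⟨hXa, hXb⟩ := C.coords hut
  have hq : C.Nr (C.f a + C.f (C.ϖ ^ r * b) * C.β)
      = a * a + a * (C.ϖ ^ r * b) * C.T + (C.ϖ ^ r * b) * (C.ϖ ^ r * b) * C.N := C.Nrc _ _
  have hq2 : a * a + a * (C.ϖ ^ r * b) * C.T + (C.ϖ ^ r * b) * (C.ϖ ^ r * b) * C.N
      = C.ϖ ^ (2 * m) * (w : o) := by rw [← hq, hw]
  have hkey : C.ϖ ^ r * (a * b' - a' * b) = C.ϖ ^ r * (y * (C.ϖ ^ (2 * m) * (w : o))) := by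
    linear_combination (C.ϖ ^ r * b) * hXa - a * hXb + (C.ϖ ^ r * y) * hq2
  have h2 : a * b' - a' * b = y * (C.ϖ ^ (2 * m) * (w : o)) :=
    mul_left_cancel₀ (pow_ne_zero r C.ϖ_ne_zero) hkey
  exact ⟨y * (w : o), by rw [h2]; ring⟩

lemma one_mem_ordUnits {r : ℕ} : (1 : O) ∈ ordUnits C.f C.ϖ C.β r :=
  ⟨C.one_mem_ordSet, 1, C.one_mem_ordSet, mul_one 1⟩

/-- The orbit relation is an equivalence relation. -/
lemma rel_equiv (r n : ℕ) :
    Equivalence (fun t t' : ordLayer C.f C.ϖ C.β C.Nr r n =>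
      ∃ u ∈ ordUnits C.f C.ϖ C.β r, u * (t : O) = t') := by
  constructor
  · exact fun t => ⟨1, C.one_mem_ordUnits, one_mul _⟩
  · rintro t t' ⟨u, ⟨hus, v, hvs, huv⟩, hut⟩
    refine ⟨v, ⟨hvs, u, hus, by rw [mul_comm]; exact huv⟩, ?_⟩
    linear_combination (t : O) * huv - v * hut
  · rintro t t' t'' ⟨u, ⟨hus, v, hvs, huv⟩, hut⟩ ⟨u', ⟨hus', v', hvs', huv'⟩, hut'⟩
    refine ⟨u' * u, ⟨C.mul_mem_ordSet hus' hus, v * v', C.mul_mem_ordSet hvs hvs', ?_⟩, ?_⟩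
    · linear_combination (u' * v') * huv + huv'
    · linear_combination u' * hut + hut'

/-- Standard representatives lie in the layer. -/
lemma z_mem_layer {r m : ℕ} (hmr : m ≤ r) (c : o) (hc : m < r → IsUnit c) :
    ∃ (g : oˣ), (C.Nr (C.f (C.ϖ ^ m * c) + C.f (C.ϖ ^ r * 1) * C.β) = C.ϖ ^ (2 * m) * (g : o))
      ∧ C.f (C.ϖ ^ m * c) + C.f (C.ϖ ^ r * 1) * C.β ∈ ordLayer C.f C.ϖ C.β C.Nr r (2 * m) := by
  obtain ⟨d, rfl⟩ : ∃ d, r = m + d := ⟨r - m, by omega⟩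
  have hval : C.Nr (C.f (C.ϖ ^ m * c) + C.f (C.ϖ ^ (m + d) * 1) * C.β)
      = C.ϖ ^ (2 * m) * (c * c + C.ϖ ^ d * c * C.T + C.ϖ ^ d * C.ϖ ^ d * C.N) := by
    rw [C.Nrc]; rw [two_mul, pow_add]; ring
  have hgu : IsUnit (c * c + C.ϖ ^ d * c * C.T + C.ϖ ^ d * C.ϖ ^ d * C.N) := by
    rcases Nat.eq_zero_or_pos d with rfl | hd
    · -- m = r : this is the norm of f c + f 1 * β
      have : c * c + C.ϖ ^ 0 * c * C.T + C.ϖ ^ 0 * C.ϖ ^ 0 * C.N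
          = C.Nr (C.f c + C.f 1 * C.β) := by rw [C.Nrc]; ring
      rw [this]
      apply C.Nr_unit.mpr
      apply C.isUnit_coords.mpr
      rintro ⟨-, hd1⟩
      exact C.hϖ.not_isUnit (isUnit_of_dvd_unit hd1 isUnit_one)
    · -- m < r : congruent to c² mod ϖ
      have hcu : IsUnit c := hc (by omega)
      apply dvr_isUnit_of_not_dvd C.hϖ
      intro hdvd
      obtain ⟨e, rfl⟩ : ∃ e, d = e + 1 := ⟨d - 1, by omega⟩
      have h2 : C.ϖ ∣ c * c := by
        obtain ⟨s, hs⟩ := hdvd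
        exact ⟨s - (C.ϖ ^ e * c * C.T + C.ϖ ^ e * C.ϖ ^ (e + 1) * C.N),
          by rw [pow_succ] at hs; linear_combination hs⟩
      rcases C.hϖ.prime.dvd_mul.mp h2 with h3 | h3 <;>
        exact C.hϖ.not_isUnit (isUnit_of_dvd_unit h3 hcu)
  refine ⟨hgu.unit, by rw [hval, IsUnit.unit_spec], ⟨⟨_, _, rfl⟩, ?_, ?_⟩⟩
  · rw [C.prim_iff]
    rintro ⟨-, hd1⟩
    exact C.hϖ.not_isUnit (isUnit_of_dvd_unit hd1 isUnit_one)
  · exact ⟨hgu.unit, by rw [hval, IsUnit.unit_spec]⟩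

end P5
end QuadCtx

section Counting
open Function
variable {o : Type*} [CommRing o] [IsDomain o] [IsDiscreteValuationRing o]

/-- Cardinality of `o / ϖ^k`. -/
lemma quot_fin_card (ϖ : o) (hϖ : Irreducible ϖ) [hFin : Finite (o ⧸ Ideal.span ({ϖ} : Set o))]
    (k : ℕ) :
    ∃ _ : Finite (o ⧸ Ideal.span ({ϖ ^ k} : Set o)),
      Nat.card (o ⧸ Ideal.span ({ϖ ^ k} : Set o))
        = (Nat.card (o ⧸ Ideal.span ({ϖ} : Set o))) ^ k := by
  induction k with
  | zero =>
    have h1 : Ideal.span ({ϖ ^ 0} : Set o) = ⊤ := by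
      rw [pow_zero, Ideal.span_singleton_one]
    haveI hsub : Subsingleton (o ⧸ Ideal.span ({ϖ ^ 0} : Set o)) := by
      constructor
      intro x y
      obtain ⟨a, rfl⟩ := Ideal.Quotient.mk_surjective x
      obtain ⟨b, rfl⟩ := Ideal.Quotient.mk_surjective y
      apply Ideal.Quotient.eq.mpr
      rw [h1]; trivial
    refine ⟨Finite.of_subsingleton, ?_⟩
    exact (Nat.card_eq_one_iff_unique.mpr ⟨hsub, ⟨0⟩⟩).trans (pow_zero _).symm
  | succ k ih =>
    obtain ⟨hFk, hck⟩ := ih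
    set pick1 : (o ⧸ Ideal.span ({ϖ ^ k} : Set o)) → o :=
      surjInv Ideal.Quotient.mk_surjective with hpick1
    set pick2 : (o ⧸ Ideal.span ({ϖ} : Set o)) → o :=
      surjInv Ideal.Quotient.mk_surjective with hpick2
    have hp1 : ∀ y, Ideal.Quotient.mk (Ideal.span ({ϖ ^ k} : Set o)) (pick1 y) = y :=
      fun y => surjInv_eq _ y
    have hp2 : ∀ y, Ideal.Quotient.mk (Ideal.span ({ϖ} : Set o)) (pick2 y) = y :=
      fun y => surjInv_eq _ y
    set Ψ : (o ⧸ Ideal.span ({ϖ ^ k} : Set o)) × (o ⧸ Ideal.span ({ϖ} : Set o))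
        → o ⧸ Ideal.span ({ϖ ^ (k + 1)} : Set o) :=
      fun p => Ideal.Quotient.mk _ (pick1 p.1 + ϖ ^ k * pick2 p.2) with hΨ
    have hbij : Function.Bijective Ψ := by
      constructor
      · rintro ⟨y, e⟩ ⟨y', e'⟩ h
        simp only [hΨ] at h
        rw [Ideal.Quotient.mk_eq_mk_iff_sub_mem, Ideal.mem_span_singleton] at h
        obtain ⟨c, hc⟩ := h
        have hy : y = y' := by
          rw [← hp1 y, ← hp1 y', Ideal.Quotient.mk_eq_mk_iff_sub_mem,
            Ideal.mem_span_singleton]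
          exact ⟨ϖ * c - pick2 e + pick2 e', by rw [pow_succ] at hc; linear_combination hc⟩
        subst hy
        have he : e = e' := by
          rw [← hp2 e, ← hp2 e', Ideal.Quotient.mk_eq_mk_iff_sub_mem,
            Ideal.mem_span_singleton]
          have h2 : ϖ ^ k * (pick2 e - pick2 e') = ϖ ^ k * (ϖ * c) := by
            rw [pow_succ] at hc; linear_combination hc
          exact ⟨c, mul_left_cancel₀ (pow_ne_zero k hϖ.ne_zero) h2⟩
        rw [he]
      · intro x
        obtain ⟨c, rfl⟩ := Ideal.Quotient.mk_surjective x
        set y := Ideal.Quotient.mk (Ideal.span ({ϖ ^ k} : Set o)) c with hy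
        have hdy : ϖ ^ k ∣ c - pick1 y := by
          rw [← Ideal.mem_span_singleton, ← Ideal.Quotient.mk_eq_mk_iff_sub_mem, hp1]
        obtain ⟨e, he⟩ := hdy
        refine ⟨(y, Ideal.Quotient.mk _ e), ?_⟩
        simp only [hΨ]
        rw [Ideal.Quotient.mk_eq_mk_iff_sub_mem, Ideal.mem_span_singleton]
        have hde : ϖ ∣ pick2 (Ideal.Quotient.mk _ e) - e := by
          rw [← Ideal.mem_span_singleton, ← Ideal.Quotient.mk_eq_mk_iff_sub_mem, hp2]
        obtain ⟨s, hs⟩ := hde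
        exact ⟨s, by rw [pow_succ]; linear_combination (ϖ ^ k) * hs - he⟩
    haveI : Finite ((o ⧸ Ideal.span ({ϖ ^ k} : Set o)) × (o ⧸ Ideal.span ({ϖ} : Set o))) :=
      Finite.instProd
    have hEq := Equiv.ofBijective Ψ hbij
    refine ⟨Finite.of_equiv _ hEq, ?_⟩
    rw [← Nat.card_congr hEq, Nat.card_prod, hck, pow_succ]

/-- `IsUnit` in the quotient `o / ϖ^(k+1)`. -/
lemma quot_isUnit_iff (ϖ : o) (hϖ : Irreducible ϖ) (k : ℕ) (c : o) :
    IsUnit (Ideal.Quotient.mk (Ideal.span ({ϖ ^ (k + 1)} : Set o)) c) ↔ ¬ ϖ ∣ c := by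
  constructor
  · intro h hdvd
    obtain ⟨y, hy⟩ := isUnit_iff_exists_inv.mp h
    obtain ⟨e, rfl⟩ := Ideal.Quotient.mk_surjective y
    rw [← map_mul, show (1 : o ⧸ Ideal.span ({ϖ ^ (k + 1)} : Set o))
      = Ideal.Quotient.mk _ 1 from (map_one _).symm,
      Ideal.Quotient.mk_eq_mk_iff_sub_mem, Ideal.mem_span_singleton] at hy
    obtain ⟨s, hs⟩ := hy
    obtain ⟨t, rfl⟩ := hdvd
    apply hϖ.not_isUnit
    exact IsUnit.of_mul_eq_one (a := ϖ) (t * e - ϖ ^ k * s)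
      (by rw [pow_succ] at hs; linear_combination hs)
  · intro h
    exact (dvr_isUnit_of_not_dvd hϖ h).map _

/-- Cardinality of the unit subtype of `o / ϖ^(m+1)`. -/
lemma quot_units_card (ϖ : o) (hϖ : Irreducible ϖ) [hFin : Finite (o ⧸ Ideal.span ({ϖ} : Set o))]
    (m : ℕ) :
    Nat.card {x : o ⧸ Ideal.span ({ϖ ^ (m + 1)} : Set o) // IsUnit x}
      = (Nat.card (o ⧸ Ideal.span ({ϖ} : Set o))) ^ (m + 1)
        - (Nat.card (o ⧸ Ideal.span ({ϖ} : Set o))) ^ m := by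
  classical
  obtain ⟨hF1, hc1⟩ := quot_fin_card ϖ hϖ (m + 1)
  obtain ⟨hF0, hc0⟩ := quot_fin_card ϖ hϖ m
  haveI := hF1
  haveI := hF0
  set pick0 : (o ⧸ Ideal.span ({ϖ ^ m} : Set o)) → o :=
    surjInv Ideal.Quotient.mk_surjective with hpick0
  have hp0 : ∀ y, Ideal.Quotient.mk (Ideal.span ({ϖ ^ m} : Set o)) (pick0 y) = y :=
    fun y => surjInv_eq _ y
  set F : (o ⧸ Ideal.span ({ϖ ^ m} : Set o))
      → {x : o ⧸ Ideal.span ({ϖ ^ (m + 1)} : Set o) // ¬ IsUnit x} :=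
    fun y => ⟨Ideal.Quotient.mk _ (ϖ * pick0 y), by
      rw [quot_isUnit_iff ϖ hϖ]
      exact fun h => h ⟨pick0 y, rfl⟩⟩ with hF
  have hFbij : Function.Bijective F := by
    constructor
    · intro y y' h
      simp only [hF, Subtype.mk.injEq] at h
      rw [Ideal.Quotient.mk_eq_mk_iff_sub_mem, Ideal.mem_span_singleton] at h
      obtain ⟨c, hc⟩ := h
      rw [← hp0 y, ← hp0 y', Ideal.Quotient.mk_eq_mk_iff_sub_mem, Ideal.mem_span_singleton]
      refine ⟨c, mul_left_cancel₀ hϖ.ne_zero ?_⟩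
      rw [pow_succ] at hc
      linear_combination hc
    · rintro ⟨x, hx⟩
      obtain ⟨c, rfl⟩ := Ideal.Quotient.mk_surjective x
      rw [quot_isUnit_iff ϖ hϖ, not_not] at hx
      obtain ⟨c', rfl⟩ := hx
      refine ⟨Ideal.Quotient.mk _ c', ?_⟩
      simp only [hF, Subtype.mk.injEq]
      rw [Ideal.Quotient.mk_eq_mk_iff_sub_mem, Ideal.mem_span_singleton]
      have hd : ϖ ^ m ∣ pick0 (Ideal.Quotient.mk _ c') - c' := by
        rw [← Ideal.mem_span_singleton, ← Ideal.Quotient.mk_eq_mk_iff_sub_mem, hp0]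
      obtain ⟨s, hs⟩ := hd
      exact ⟨s, by rw [pow_succ]; linear_combination ϖ * hs⟩
  have hcnon : Nat.card {x : o ⧸ Ideal.span ({ϖ ^ (m + 1)} : Set o) // ¬ IsUnit x}
      = (Nat.card (o ⧸ Ideal.span ({ϖ} : Set o))) ^ m := by
    rw [← Nat.card_congr (Equiv.ofBijective F hFbij), hc0]
  have hsum : Nat.card {x : o ⧸ Ideal.span ({ϖ ^ (m + 1)} : Set o) // IsUnit x}
      + Nat.card {x : o ⧸ Ideal.span ({ϖ ^ (m + 1)} : Set o) // ¬ IsUnit x}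
      = (Nat.card (o ⧸ Ideal.span ({ϖ} : Set o))) ^ (m + 1) := by
    rw [← hc1, ← Nat.card_sum, Nat.card_congr (Equiv.sumCompl _)]
  omega
end Counting

namespace QuadCtx
section P7
open Function
variable {o O : Type*} [CommRing o] [IsDomain o] [IsDiscreteValuationRing o]
    [CommRing O] [IsDomain O] [IsDiscreteValuationRing O]
variable (C : QuadCtx o O)

lemma z_mem {r m : ℕ} (hmr : m ≤ r) (c : o) (hc : m < r → IsUnit c) :
    C.f (C.ϖ ^ m * c) + C.f (C.ϖ ^ r * 1) * C.β ∈ ordLayer C.f C.ϖ C.β C.Nr r (2 * m) :=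
  (C.z_mem_layer hmr c hc).choose_spec.2

lemma z_norm {r m : ℕ} (hmr : m ≤ r) (c : o) (hc : m < r → IsUnit c) :
    ∃ g : oˣ, C.Nr (C.f (C.ϖ ^ m * c) + C.f (C.ϖ ^ r * 1) * C.β) = C.ϖ ^ (2 * m) * (g : o) :=
  ⟨(C.z_mem_layer hmr c hc).choose, (C.z_mem_layer hmr c hc).choose_spec.1⟩

/-- Case `n` odd or `n > 2r`: no orbits. -/
lemma orbits_empty {r n : ℕ} (h : Odd n ∨ 2 * r < n) :
    ordLayerOrbits C.f C.ϖ C.β C.Nr r n = 0 := by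
  unfold ordLayerOrbits
  haveI : IsEmpty (ordLayer C.f C.ϖ C.β C.Nr r n) := by
    constructor
    rintro ⟨z, hz⟩
    obtain ⟨m, a, b, w, hn, hmr, -, -, -, -⟩ := C.layer_struct hz
    rcases h with ⟨j, hj⟩ | h <;> omega
  haveI : IsEmpty (Quot (fun t t' : ordLayer C.f C.ϖ C.β C.Nr r n =>
      ∃ u ∈ ordUnits C.f C.ϖ C.β r, u * (t : O) = t')) :=
    ⟨fun q => Quot.inductionOn q (fun t => IsEmpty.false t)⟩
  exact Nat.card_of_isEmpty

/-- Case `n = 0`: one orbit. -/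
lemma orbits_zero (r : ℕ) : ordLayerOrbits C.f C.ϖ C.β C.Nr r 0 = 1 := by
  unfold ordLayerOrbits
  apply Nat.card_eq_one_iff_unique.mpr
  constructor
  · constructor
    intro x y
    refine Quot.inductionOn x (fun t => ?_)
    refine Quot.inductionOn y (fun t' => ?_)
    apply Quot.sound
    obtain ⟨hset, hprim, u, hu⟩ := t.2
    obtain ⟨hset', hprim', u', hu'⟩ := t'.2
    have hNt : IsUnit (C.Nr (t : O)) := by
      rw [hu, pow_zero, one_mul]; exact u.isUnit
    have hNt' : IsUnit (C.Nr (t' : O)) := by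
      rw [hu', pow_zero, one_mul]; exact u'.isUnit
    obtain ⟨-, w, hws, htw⟩ := C.mem_ordUnits_of hset hNt
    obtain ⟨-, w', hws', htw'⟩ := C.mem_ordUnits_of hset' hNt'
    refine ⟨(t' : O) * w, ⟨C.mul_mem_ordSet hset' hws, (t : O) * w',
      C.mul_mem_ordSet hset hws', ?_⟩, ?_⟩
    · linear_combination ((t' : O) * w') * htw + htw'
    · linear_combination (t' : O) * htw
  · refine ⟨Quot.mk _ ⟨1, C.one_mem_ordSet, ?_, 1, by simp⟩⟩
    rintro ⟨s, hs, h1⟩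
    exact C.hunram.not_isUnit (IsUnit.of_mul_eq_one s h1.symm)

/-- Case `n = 2r > 0`. -/
lemma orbits_top {r : ℕ} (hr : 0 < r) :
    ordLayerOrbits C.f C.ϖ C.β C.Nr r (2 * r) = Nat.card (o ⧸ Ideal.span ({C.ϖ ^ r} : Set o)) := by
  unfold ordLayerOrbits
  set pick : (o ⧸ Ideal.span ({C.ϖ ^ r} : Set o)) → o := surjInv Ideal.Quotient.mk_surjective with hpickdef
  have hpick : ∀ y, Ideal.Quotient.mk (Ideal.span ({C.ϖ ^ r} : Set o)) (pick y) = y := fun y => surjInv_eq _ y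
  have hcvac : ∀ c : o, r < r → IsUnit c := fun c h => absurd h (lt_irrefl r)
  set F : (o ⧸ Ideal.span ({C.ϖ ^ r} : Set o)) → Quot (fun t t' : ordLayer C.f C.ϖ C.β C.Nr r (2 * r) =>
      ∃ u ∈ ordUnits C.f C.ϖ C.β r, u * (t : O) = t') :=
    fun x => Quot.mk _ ⟨_, C.z_mem le_rfl (pick x) (hcvac _)⟩ with hF
  have hbij : Function.Bijective F := by
    constructor
    · intro x x' h
      have hrel := ((C.rel_equiv r (2 * r)).eqvGen_iff).mp (Quot.eq.mp h)
      obtain ⟨g, hg⟩ := C.z_norm le_rfl (pick x) (hcvac _)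
      have hd := C.dvd_of_rel hg hrel
      have hd2 : C.ϖ ^ r ∣ pick x - pick x' := by
        obtain ⟨e, he⟩ := hd
        refine ⟨e, mul_left_cancel₀ (pow_ne_zero r C.ϖ_ne_zero) ?_⟩
        linear_combination he
      rw [← hpick x, ← hpick x', Ideal.Quotient.mk_eq_mk_iff_sub_mem]
      exact Ideal.mem_span_singleton.mpr hd2
    · intro qt
      refine Quot.inductionOn qt (fun t => ?_)
      obtain ⟨m', a, b, w, hn, hm'r, hzeq, hNz, hbu, hau⟩ := C.layer_struct t.2
      have hm' : m' = r := by omega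
      subst m'
      have hb : IsUnit b := hbu hr
      refine ⟨Ideal.Quotient.mk (Ideal.span ({C.ϖ ^ r} : Set o)) (a * ((hb.unit⁻¹ : oˣ) : o)), ?_⟩
      apply Quot.sound
      show ∃ u ∈ ordUnits C.f C.ϖ C.β r, u * _ = (t : O)
      rw [hzeq]
      obtain ⟨g, hg⟩ := C.z_norm le_rfl (pick (Ideal.Quotient.mk (Ideal.span ({C.ϖ ^ r} : Set o)) (a * ((hb.unit⁻¹ : oˣ) : o))))
        (hcvac _)
      have hw' : C.Nr (C.f (C.ϖ ^ r * a) + C.f (C.ϖ ^ r * b) * C.β)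
          = C.ϖ ^ (2 * r) * (w : o) := by rw [← hzeq]; exact hNz
      apply C.rel_of_dvd le_rfl ⟨_, rfl⟩ ⟨_, rfl⟩ hg hw'
      have hdd : C.ϖ ^ r ∣ pick (Ideal.Quotient.mk (Ideal.span ({C.ϖ ^ r} : Set o)) (a * ((hb.unit⁻¹ : oˣ) : o))) * b - a := by
        rw [← Ideal.mem_span_singleton, ← Ideal.Quotient.mk_eq_mk_iff_sub_mem]
        rw [map_mul, hpick, ← map_mul]
        congr 1
        rw [mul_assoc, IsUnit.val_inv_mul, mul_one]
      obtain ⟨e, he⟩ := hdd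
      exact ⟨e, by linear_combination (C.ϖ ^ r) * he⟩
  exact (Nat.card_congr (Equiv.ofBijective F hbij)).symm

/-- Case `0 < n/2 < r`. -/
lemma orbits_mid {r m : ℕ} (hm : 0 < m) (hmr : m < r) :
    ordLayerOrbits C.f C.ϖ C.β C.Nr r (2 * m)
      = Nat.card {x : o ⧸ Ideal.span ({C.ϖ ^ m} : Set o) // IsUnit x} := by
  unfold ordLayerOrbits
  obtain ⟨m', rfl⟩ : ∃ m', m = m' + 1 := ⟨m - 1, by omega⟩
  set pick : (o ⧸ Ideal.span ({C.ϖ ^ (m' + 1)} : Set o)) → o := surjInv Ideal.Quotient.mk_surjective with hpickdef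
  have hpick : ∀ y, Ideal.Quotient.mk (Ideal.span ({C.ϖ ^ (m' + 1)} : Set o)) (pick y) = y := fun y => surjInv_eq _ y
  have hpunit : ∀ x : o ⧸ Ideal.span ({C.ϖ ^ (m' + 1)} : Set o), IsUnit x → IsUnit (pick x) := by
    intro x hx
    rw [← hpick x] at hx
    exact dvr_isUnit_of_not_dvd C.hϖ ((quot_isUnit_iff C.ϖ C.hϖ m' (pick x)).mp hx)
  set F : {x : o ⧸ Ideal.span ({C.ϖ ^ (m' + 1)} : Set o) // IsUnit x} → Quot (fun t t' : ordLayer C.f C.ϖ C.β C.Nr r (2 * (m' + 1)) =>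
      ∃ u ∈ ordUnits C.f C.ϖ C.β r, u * (t : O) = t') :=
    fun x => Quot.mk _ ⟨_, C.z_mem hmr.le (pick x.1) (fun _ => hpunit x.1 x.2)⟩ with hF
  have hbij : Function.Bijective F := by
    constructor
    · intro x x' h
      have hrel := ((C.rel_equiv r (2 * (m' + 1))).eqvGen_iff).mp (Quot.eq.mp h)
      obtain ⟨g, hg⟩ := C.z_norm hmr.le (pick x.1) (fun _ => hpunit x.1 x.2)
      have hd := C.dvd_of_rel hg hrel
      have hd2 : C.ϖ ^ (m' + 1) ∣ pick x.1 - pick x'.1 := by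
        obtain ⟨e, he⟩ := hd
        refine ⟨e, mul_left_cancel₀ (pow_ne_zero (m' + 1) C.ϖ_ne_zero) ?_⟩
        linear_combination he
      apply Subtype.ext
      rw [← hpick x.1, ← hpick x'.1, Ideal.Quotient.mk_eq_mk_iff_sub_mem]
      exact Ideal.mem_span_singleton.mpr hd2
    · intro qt
      refine Quot.inductionOn qt (fun t => ?_)
      obtain ⟨k, a, b, w, hn, hkr, hzeq, hNz, hbu, hau⟩ := C.layer_struct t.2
      have hk : k = m' + 1 := by omega
      subst k
      have hb : IsUnit b := hbu (by omega)
      have ha : IsUnit a := hau hmr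
      have hxunit : IsUnit (Ideal.Quotient.mk (Ideal.span ({C.ϖ ^ (m' + 1)} : Set o)) (a * ((hb.unit⁻¹ : oˣ) : o))) :=
        (ha.mul hb.unit⁻¹.isUnit).map _
      refine ⟨⟨Ideal.Quotient.mk (Ideal.span ({C.ϖ ^ (m' + 1)} : Set o)) (a * ((hb.unit⁻¹ : oˣ) : o)), hxunit⟩, ?_⟩
      apply Quot.sound
      show ∃ u ∈ ordUnits C.f C.ϖ C.β r, u * _ = (t : O)
      rw [hzeq]
      obtain ⟨g, hg⟩ := C.z_norm hmr.le (pick (Ideal.Quotient.mk (Ideal.span ({C.ϖ ^ (m' + 1)} : Set o)) (a * ((hb.unit⁻¹ : oˣ) : o))))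
        (fun _ => hpunit _ hxunit)
      have hw' : C.Nr (C.f (C.ϖ ^ (m' + 1) * a) + C.f (C.ϖ ^ r * b) * C.β)
          = C.ϖ ^ (2 * (m' + 1)) * (w : o) := by rw [← hzeq]; exact hNz
      apply C.rel_of_dvd hmr.le ⟨_, rfl⟩ ⟨_, rfl⟩ hg hw'
      have hdd : C.ϖ ^ (m' + 1) ∣
          pick (Ideal.Quotient.mk (Ideal.span ({C.ϖ ^ (m' + 1)} : Set o)) (a * ((hb.unit⁻¹ : oˣ) : o))) * b - a := by
        rw [← Ideal.mem_span_singleton, ← Ideal.Quotient.mk_eq_mk_iff_sub_mem]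
        rw [map_mul, hpick, ← map_mul]
        congr 1
        rw [mul_assoc, IsUnit.val_inv_mul, mul_one]
      obtain ⟨e, he⟩ := hdd
      exact ⟨e, by linear_combination (C.ϖ ^ (m' + 1)) * he⟩
  exact (Nat.card_congr (Equiv.ofBijective F hbij)).symm

end P7
end QuadCtx

section Construction
variable {o O : Type*} [CommRing o] [IsDomain o] [IsDiscreteValuationRing o]
    [CommRing O] [IsDomain O] [IsDiscreteValuationRing O]

/-- Derivation of the trace/norm data of `β`. -/
lemma exists_TN (f : o →+* O) (hf : Function.Injective f) (ϖ : o) (hϖ : Irreducible ϖ)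
    (β : O) (hβ : β ∉ Set.range f) (hgen : ∀ z : O, ∃ x y : o, z = f x + f y * β)
    (σ : O →+* O) (hσf : ∀ x : o, σ (f x) = f x) (hσσ : ∀ z : O, σ (σ z) = z)
    (Nr : O →* o) (hNr : ∀ z : O, f (Nr z) = z * σ z) (hβunit : IsUnit (Nr β))
    (hunram : Irreducible (f ϖ)) :
    ∃ T N : o, IsUnit N ∧ σ β = f T - β ∧ β * β = f T * β - f N := by
  have hβu : IsUnit β := sa_βunit hNr hβunit
  obtain ⟨p, s, hps⟩ := hgen (σ β)
  have hσσβ : σ (σ β) = β := hσσ β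
  rw [hps, map_add, map_mul, hσf, hσf, hps] at hσσβ
  have h2 : f (p + s * p) + f (s * s - 1) * β = 0 := by
    simp only [map_add, map_mul, map_sub, map_one]
    linear_combination hσσβ
  obtain ⟨hp, hs⟩ := sa_uniq hf hϖ hβ hunram hβu h2
  have hs1 : s = 1 ∨ s = -1 := by
    rcases mul_self_eq_one_iff.mp (by linear_combination hs) with h | h
    · exact Or.inl h
    · exact Or.inr h
  suffices hcase : ∃ T : o, σ β = f T - β by
    obtain ⟨T, hT⟩ := hcase
    refine ⟨T, Nr β, hβunit, hT, ?_⟩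
    have hNβ := hNr β
    linear_combination hNβ + β * hT
  rcases hs1 with hs1 | hs1
  · -- s = 1
    subst hs1
    have h2p : (2 : o) * p = 0 := by linear_combination hp
    by_cases hchar : (2 : o) = 0
    · refine ⟨p, ?_⟩
      have h2O : (1 : O) + 1 = 0 := by
        have : f ((2 : o)) = f 0 := by rw [hchar]
        simpa [map_ofNat, one_add_one_eq_two] using this
      rw [hps]
      simp only [map_one, one_mul]
      linear_combination β * h2O
    · exfalso
      have hp0 : p = 0 := by
        rcases mul_eq_zero.mp h2p with h | h
        · exact absurd h hchar
        · exact h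
      have hσβid : σ β = β := by rw [hps, hp0]; simp
      have e1 : f (Nr (1 + β)) = (1 + β) * (1 + β) := by
        rw [hNr, map_add, map_one, hσβid]
      have e2 : f (Nr β) = β * β := by rw [hNr, hσβid]
      have h3 : f (Nr (1 + β) - 1 - Nr β) + f (-(2 : o)) * β = 0 := by
        simp only [map_sub, map_neg, map_one, map_ofNat]
        linear_combination e1 - e2
      have := (sa_uniq hf hϖ hβ hunram hβu h3).2
      exact hchar (by linear_combination -this)
  · -- s = -1
    subst hs1
    refine ⟨p, ?_⟩
    rw [hps]
    simp only [map_neg, map_one]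
    ring
end Construction

/-- If `E/F` is an unramified quadratic field extension and the
residue field of `𝔬` has `q` elements, then `|𝒪_r^× \ 𝒪_r^{(n)}|` equals: `0` if `n`
is odd or `n > 2r`; `1` if `n = 0`; `q^r` if `n = 2r`; and
`q^{n/2}(1 − q^{−1}) = q^{n/2} − q^{n/2 − 1}` if `n` is even and `0 < n < 2r`. -/
theorem stmt_5 {o O : Type*} [CommRing o] [IsDomain o] [IsDiscreteValuationRing o]
    [CommRing O] [IsDomain O] [IsDiscreteValuationRing O]
    (f : o →+* O) (hf : Function.Injective f)
    (ϖ : o) (hϖ : Irreducible ϖ)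
    (q : ℕ) (hfin : Finite (o ⧸ Ideal.span ({ϖ} : Set o)))
    (hq : Nat.card (o ⧸ Ideal.span ({ϖ} : Set o)) = q)
    (β : O) (hβ : β ∉ Set.range f)
    (hgen : ∀ z : O, ∃ x y : o, z = f x + f y * β)
    (σ : O →+* O) (hσf : ∀ x : o, σ (f x) = f x) (hσσ : ∀ z : O, σ (σ z) = z)
    (Nr : O →* o) (hNr : ∀ z : O, f (Nr z) = z * σ z)
    (hβunit : IsUnit (Nr β))
    (hunram : Irreducible (f ϖ))
    (r n : ℕ) :
    ((Odd n ∨ 2 * r < n) → ordLayerOrbits f ϖ β Nr r n = 0) ∧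
    (n = 0 → ordLayerOrbits f ϖ β Nr r n = 1) ∧
    (n = 2 * r → ordLayerOrbits f ϖ β Nr r n = q ^ r) ∧
    (Even n → 0 < n → n < 2 * r →
      ordLayerOrbits f ϖ β Nr r n = q ^ (n / 2) - q ^ (n / 2 - 1)) := by
  haveI := hfin
  obtain ⟨T, N, hN, hσβ, hβ2⟩ := exists_TN f hf ϖ hϖ β hβ hgen σ hσf hσσ Nr hNr hβunit hunram
  let C : QuadCtx o O :=
    ⟨f, hf, ϖ, hϖ, β, hβ, hgen, σ, hσf, hσσ, Nr, hNr, hβunit, hunram, T, N, hN, hσβ, hβ2⟩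
  refine ⟨fun h => C.orbits_empty h, fun h => ?_, fun h => ?_, fun hev hpos hlt => ?_⟩
  · subst h; exact C.orbits_zero r
  · subst h
    rcases Nat.eq_zero_or_pos r with rfl | hr
    · rw [pow_zero]
      exact C.orbits_zero 0
    · obtain ⟨-, hcard⟩ := quot_fin_card ϖ hϖ r
      exact (C.orbits_top hr).trans (hcard.trans (by rw [hq]))
  · obtain ⟨k, hk⟩ := hev
    have hn : n = 2 * ((k - 1) + 1) := by omega
    obtain ⟨m', rfl⟩ : ∃ m', n = 2 * (m' + 1) := ⟨k - 1, hn⟩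
    have h1 := C.orbits_mid (r := r) (m := m' + 1) (by omega) (by omega)
    have h2 := quot_units_card ϖ hϖ m'
    rw [hq] at h2
    have e1 : 2 * (m' + 1) / 2 = m' + 1 := by omega
    have e2 : m' + 1 - 1 = m' := by omega
    rw [e1, e2]
    exact h1.trans h2
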